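/- Let u and v be positive integers, s = min(u,v), t = max(u,v), and in ℝ set q₊ = 2 + uv + √(uv(4+uv)) and q₋ = 2 + uv − √(uv(4+uv)). Then for every natural number n, μ(𝒯^{(u,v)}(2n+1)) = √t · ((q₊)^{n+1} − (q₋)^{n+1}) / (2^{n+1} · √(s(4+uv))). -/

import Mathlib

open Matrix Finset

def Lm (u : ℕ) : Matrix (Fin 2) (Fin 2) ℕ := !![1, 0; u, 1]
def Rm (v : ℕ) : Matrix (Fin 2) (Fin 2) ℕ := !![1, v; 0, 1]

/-- The product of the matrices corresponding to a word: `false ↦ L_u`, `true ↦ R_v`. -/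
def wordProd (u v : ℕ) (w : List Bool) : Matrix (Fin 2) (Fin 2) ℕ :=
  (w.map (fun b => if b then Rm v else Lm u)).prod

/-- μ of a matrix: maximum of the four entries. -/
def matMax (M : Matrix (Fin 2) (Fin 2) ℕ) : ℕ :=
  max (max (M 0 0) (M 0 1)) (max (M 1 0) (M 1 1))

/-- μ(𝒯^{(u,v)}(I₂;n)): maximum of μ over all products of exactly n matrices each L_u or R_v. -/
def levelMax (u v n : ℕ) : ℕ :=
  Finset.univ.sup (fun w : Fin n → Bool => matMax (wordProd u v (List.ofFn w)))







def fg (u v : ℕ) : ℕ → ℕ × ℕ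
  | 0 => (0, 1)
  | k+1 => ((fg u v k).1 + (fg u v k).2, u*v*(fg u v k).1 + (u*v+1)*(fg u v k).2)

def ff (u v k : ℕ) : ℕ := (fg u v k).1

lemma ff_rec (u v k : ℕ) : ff u v (k+2) + ff u v k = (u*v+2) * ff u v (k+1) := by
  simp [ff, fg]; ring

lemma wordProd_append (u v : ℕ) (l1 l2 : List Bool) :
    wordProd u v (l1 ++ l2) = wordProd u v l1 * wordProd u v l2 := by
  simp [wordProd]

lemma wordProd_cons (u v : ℕ) (b : Bool) (bs : List Bool) :
    wordProd u v (b :: bs) = (if b then Rm v else Lm u) * wordProd u v bs := by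
  simp [wordProd]

def alt1 : ℕ → List Bool
  | 0 => [false]
  | k+1 => alt1 k ++ [true, false]

def alt2 : ℕ → List Bool
  | 0 => [true]
  | k+1 => alt2 k ++ [false, true]

lemma alt1_length (k : ℕ) : (alt1 k).length = 2*k+1 := by
  induction k with
  | zero => rfl
  | succ k ih => simp [alt1, ih]; omega

lemma alt2_length (k : ℕ) : (alt2 k).length = 2*k+1 := by
  induction k with
  | zero => rfl
  | succ k ih => simp [alt2, ih]; omega

lemma wordProd_alt1 (u v : ℕ) (k : ℕ) : wordProd u v (alt1 k) =
    !![(fg u v k).2, v * ff u v k; u * ff u v (k+1), (fg u v k).2] := by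
  induction k with
  | zero =>
      show wordProd u v [false] = _
      ext i j
      fin_cases i <;> fin_cases j <;> simp [wordProd, ff, fg, Lm]
  | succ k ih =>
      show wordProd u v (alt1 k ++ [true, false]) = _
      rw [wordProd_append, ih]
      ext i j
      fin_cases i <;> fin_cases j <;>
        simp [wordProd, Lm, Rm, Matrix.mul_apply, Fin.sum_univ_two, ff, fg] <;> ring

lemma wordProd_alt2 (u v : ℕ) (k : ℕ) : wordProd u v (alt2 k) =
    !![(fg u v k).2, v * ff u v (k+1); u * ff u v k, (fg u v k).2] := by
  induction k with
  | zero =>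
      show wordProd u v [true] = _
      ext i j
      fin_cases i <;> fin_cases j <;> simp [wordProd, ff, fg, Rm]
  | succ k ih =>
      show wordProd u v (alt2 k ++ [false, true]) = _
      rw [wordProd_append, ih]
      ext i j
      fin_cases i <;> fin_cases j <;>
        simp [wordProd, Lm, Rm, Matrix.mul_apply, Fin.sum_univ_two, ff, fg] <;> ring

noncomputable def AP (w : ℝ) : ℕ → ℝ × ℝ
  | 0 => (0, 1)
  | m+1 => ((AP w m).2, w * (AP w m).2 + (AP w m).1)

lemma AP_facts (w : ℝ) (hw : 1 ≤ w) : ∀ m, 0 ≤ (AP w m).1 ∧ (AP w m).1 ≤ (AP w m).2 := by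
  intro m
  induction m with
  | zero => norm_num [AP]
  | succ m ih =>
      obtain ⟨h1, h2⟩ := ih
      refine ⟨by simp only [AP]; linarith, by simp only [AP]; nlinarith⟩

lemma step_bound (w d Am A'm x y : ℝ) (hw : 1 ≤ w) (hd : 0 ≤ d) (hx0 : 0 ≤ x) (hy0 : 0 ≤ y)
    (hA'0 : 0 ≤ A'm) (hA'A : A'm ≤ Am) (hx : x ≤ d*Am) (hy : y ≤ d*Am)
    (hmin : x ≤ d*A'm ∨ y ≤ d*A'm) :
    w*x + y ≤ d*(w*Am + A'm) := by
  rcases hmin with h | h <;> nlinarith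

lemma col_bound (u v : ℕ) (su sv : ℝ) (hsu2 : su*su = (u:ℝ)) (hsv2 : sv*sv = (v:ℝ))
    (hsu : 1 ≤ su) (hsv : 1 ≤ sv) (bs : List Bool) (j : Fin 2) :
    su * (wordProd u v bs 0 j : ℝ) ≤
        (if j = 0 then su else sv) * (AP (su*sv) bs.length).2 ∧
      sv * (wordProd u v bs 1 j : ℝ) ≤
        (if j = 0 then su else sv) * (AP (su*sv) bs.length).2 ∧
      (su * (wordProd u v bs 0 j : ℝ) ≤
          (if j = 0 then su else sv) * (AP (su*sv) bs.length).1 ∨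
        sv * (wordProd u v bs 1 j : ℝ) ≤
          (if j = 0 then su else sv) * (AP (su*sv) bs.length).1) := by
  have hw : 1 ≤ su * sv := by nlinarith
  induction bs with
  | nil =>
      fin_cases j <;> simp [wordProd, Matrix.one_apply, AP] <;> linarith
  | cons b bs ih =>
      obtain ⟨ihx, ihy, ihmin⟩ := ih
      obtain ⟨hA1, hA2⟩ := AP_facts (su*sv) hw bs.length
      have hApos : 0 ≤ (AP (su*sv) bs.length).2 := le_trans hA1 hA2
      have hAP1 : (AP (su*sv) (bs.length+1)).1 = (AP (su*sv) bs.length).2 := rfl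
      have hAP2 : (AP (su*sv) (bs.length+1)).2 =
          (su*sv) * (AP (su*sv) bs.length).2 + (AP (su*sv) bs.length).1 := rfl
      have hAmono : (AP (su*sv) bs.length).2 ≤ (AP (su*sv) (bs.length+1)).2 := by
        rw [hAP2]; nlinarith
      have hd : (0:ℝ) ≤ (if j = 0 then su else sv) := by split <;> linarith
      have hx0 : (0:ℝ) ≤ su * (wordProd u v bs 0 j : ℝ) := by positivity
      have hy0 : (0:ℝ) ≤ sv * (wordProd u v bs 1 j : ℝ) := by positivity
      cases b with
      | false =>
          have e0 : wordProd u v (false :: bs) 0 j = wordProd u v bs 0 j := by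
            rw [wordProd_cons]
            simp [Lm, Matrix.mul_apply, Fin.sum_univ_two]
          have e1 : (wordProd u v (false :: bs) 1 j : ℝ) =
              u * wordProd u v bs 0 j + wordProd u v bs 1 j := by
            rw [wordProd_cons]
            simp [Lm, Matrix.mul_apply, Fin.sum_univ_two]
            try push_cast
            try ring
          have key : sv * ((u:ℝ) * wordProd u v bs 0 j + wordProd u v bs 1 j) =
              (su*sv) * (su * wordProd u v bs 0 j) + sv * wordProd u v bs 1 j := by
            linear_combination (sv * (wordProd u v bs 0 j : ℝ)) * hsu2.symm
          refine ⟨?_, ?_, Or.inl ?_⟩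
          · simp only [List.length_cons, e0]
            exact le_trans ihx (mul_le_mul_of_nonneg_left hAmono hd)
          · simp only [List.length_cons, e1, key, hAP2]
            exact step_bound _ _ _ _ _ _ hw hd hx0 hy0 hA1 hA2 ihx ihy ihmin
          · simp only [List.length_cons, e0, hAP1]
            exact ihx
      | true =>
          have e1 : wordProd u v (true :: bs) 1 j = wordProd u v bs 1 j := by
            rw [wordProd_cons]
            simp [Rm, Matrix.mul_apply, Fin.sum_univ_two]
          have e0 : (wordProd u v (true :: bs) 0 j : ℝ) =
              wordProd u v bs 0 j + v * wordProd u v bs 1 j := by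
            rw [wordProd_cons]
            simp [Rm, Matrix.mul_apply, Fin.sum_univ_two]
            try push_cast
            try ring
          have key : su * ((wordProd u v bs 0 j : ℝ) + v * wordProd u v bs 1 j) =
              (su*sv) * (sv * wordProd u v bs 1 j) + su * wordProd u v bs 0 j := by
            linear_combination (su * (wordProd u v bs 1 j : ℝ)) * hsv2.symm
          refine ⟨?_, ?_, Or.inr ?_⟩
          · simp only [List.length_cons, e0, key, hAP2]
            exact step_bound _ _ _ _ _ _ hw hd hy0 hx0 hA1 hA2 ihy ihx ihmin.symm
          · simp only [List.length_cons, e1]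
            exact le_trans ihy (mul_le_mul_of_nonneg_left hAmono hd)
          · simp only [List.length_cons, e1, hAP1]
            exact ihy

lemma AP_ff (u v : ℕ) (su sv : ℝ) (hsu2 : su*su = (u:ℝ)) (hsv2 : sv*sv = (v:ℝ)) :
    ∀ k, (AP (su*sv) (2*k)).2 = (ff u v (k+1) : ℝ) - ff u v k ∧
         (AP (su*sv) (2*k+1)).2 = (su*sv) * ff u v (k+1) := by
  intro k
  induction k with
  | zero => norm_num [AP, ff, fg]
  | succ k ih =>
      obtain ⟨h1, h2⟩ := ih
      have hrec : (ff u v (k+2) : ℝ) + ff u v k = ((u:ℝ)*v+2) * ff u v (k+1) := by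
        exact_mod_cast congrArg (fun x : ℕ => (x:ℝ)) (ff_rec u v k)
      have e2 : 2*(k+1) = (2*k+1)+1 := by ring
      have e3 : 2*(k+1)+1 = ((2*k+1)+1)+1 := by ring
      have hA2 : (AP (su*sv) (2*(k+1))).2 =
          (su*sv) * (AP (su*sv) (2*k+1)).2 + (AP (su*sv) (2*k+1)).1 := by rw [e2]; rfl
      have hA1 : (AP (su*sv) (2*k+1)).1 = (AP (su*sv) (2*k)).2 := rfl
      have hA3 : (AP (su*sv) (2*(k+1)+1)).2 =
          (su*sv) * (AP (su*sv) (2*(k+1))).2 + (AP (su*sv) (2*(k+1))).1 := by rw [e3]; rfl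
      have hA4 : (AP (su*sv) (2*(k+1))).1 = (AP (su*sv) (2*k+1)).2 := by rw [e2]; rfl
      have hfirst : (AP (su*sv) (2*(k+1))).2 = (ff u v (k+2) : ℝ) - ff u v (k+1) := by
        rw [hA2, hA1, h1, h2]
        linear_combination (-1:ℝ)*hrec + (ff u v (k+1):ℝ)*(sv*sv)*hsu2 +
          (ff u v (k+1):ℝ)*(u:ℝ)*hsv2
      refine ⟨hfirst, ?_⟩
      rw [hA3, hA4, hfirst, h2]
      ring

lemma entry_le_matMax (M : Matrix (Fin 2) (Fin 2) ℕ) (i j : Fin 2) : M i j ≤ matMax M := by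
  fin_cases i <;> fin_cases j
  · exact le_trans (le_max_left _ _) (le_max_left _ _)
  · exact le_trans (le_max_right _ _) (le_max_left _ _)
  · exact le_trans (le_max_left _ _) (le_max_right _ _)
  · exact le_trans (le_max_right _ _) (le_max_right _ _)

lemma word_bound (u v : ℕ) (hu : 1 ≤ u) (hv : 1 ≤ v) (n : ℕ) (bs : List Bool)
    (hlen : bs.length = 2*n+1) :
    matMax (wordProd u v bs) ≤ max u v * ff u v (n+1) := by
  set su := Real.sqrt u with hsu'
  set sv := Real.sqrt v with hsv'
  have hsu2 : su*su = (u:ℝ) := Real.mul_self_sqrt (by positivity)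
  have hsv2 : sv*sv = (v:ℝ) := Real.mul_self_sqrt (by positivity)
  have hsu : 1 ≤ su := by
    rw [hsu', show (1:ℝ) = Real.sqrt 1 by simp]
    exact Real.sqrt_le_sqrt (by exact_mod_cast hu)
  have hsv : 1 ≤ sv := by
    rw [hsv', show (1:ℝ) = Real.sqrt 1 by simp]
    exact Real.sqrt_le_sqrt (by exact_mod_cast hv)
  clear_value su sv
  have hsupos : (0:ℝ) < su := by linarith
  have hsvpos : (0:ℝ) < sv := by linarith
  obtain ⟨c1, c2, -⟩ := col_bound u v su sv hsu2 hsv2 hsu hsv bs 0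
  obtain ⟨c3, c4, -⟩ := col_bound u v su sv hsu2 hsv2 hsu hsv bs 1
  rw [if_neg (by decide)] at c3
  rw [if_neg (by decide)] at c4
  rw [if_pos (by decide)] at c1
  rw [if_pos (by decide)] at c2
  rw [hlen] at c1 c2 c3 c4
  have hAv := (AP_ff u v su sv hsu2 hsv2 n).2
  rw [hAv] at c1 c2 c3 c4
  set F := (ff u v (n+1) : ℝ) with hF
  have hFpos : 0 ≤ F := by positivity
  set T := (max u v : ℕ) with hT
  have huT : (u:ℝ) ≤ (T:ℝ) := by exact_mod_cast le_max_left u v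
  have hvT : (v:ℝ) ≤ (T:ℝ) := by exact_mod_cast le_max_right u v
  have hwT : su * sv ≤ (T:ℝ) := by nlinarith
  -- entry bounds
  have hTF : su * sv * F ≤ (T:ℝ) * F := mul_le_mul_of_nonneg_right hwT hFpos
  have b00 : (wordProd u v bs 0 0 : ℝ) ≤ T * F :=
    le_trans (le_of_mul_le_mul_left c1 hsupos) hTF
  have b11 : (wordProd u v bs 1 1 : ℝ) ≤ T * F :=
    le_trans (le_of_mul_le_mul_left c4 hsvpos) hTF
  have e3 : sv*(su*sv*F) = su*((v:ℝ)*F) := by linear_combination su*F*hsv2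
  have b01 : (wordProd u v bs 0 1 : ℝ) ≤ T * F := by
    have h := le_of_mul_le_mul_left (c3.trans_eq e3) hsupos
    nlinarith
  have e2 : su*(su*sv*F) = sv*((u:ℝ)*F) := by linear_combination sv*F*hsu2
  have b10 : (wordProd u v bs 1 0 : ℝ) ≤ T * F := by
    have h := le_of_mul_le_mul_left (c2.trans_eq e2) hsvpos
    nlinarith
  have cast : ∀ i j : Fin 2, wordProd u v bs i j ≤ T * ff u v (n+1) := by
    intro i j
    have : (wordProd u v bs i j : ℝ) ≤ ((T * ff u v (n+1) : ℕ) : ℝ) := by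
      push_cast
      fin_cases i <;> fin_cases j <;> assumption
    exact_mod_cast this
  simp only [matMax]
  exact max_le (max_le (cast 0 0) (cast 0 1)) (max_le (cast 1 0) (cast 1 1))

lemma le_levelMax (u v : ℕ) (l : List Bool) :
    matMax (wordProd u v l) ≤ levelMax u v l.length := by
  have h := Finset.le_sup (f := fun w : Fin l.length → Bool =>
    matMax (wordProd u v (List.ofFn w))) (Finset.mem_univ l.get)
  simp only [List.ofFn_get] at h
  exact h

lemma levelMax_eq (u v : ℕ) (hu : 1 ≤ u) (hv : 1 ≤ v) (n : ℕ) :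
    levelMax u v (2*n+1) = max u v * ff u v (n+1) := by
  apply le_antisymm
  · apply Finset.sup_le
    intro w _
    exact word_bound u v hu hv n (List.ofFn w) (by simp)
  · rcases le_total u v with h | h
    · have h1 := le_levelMax u v (alt2 n)
      rw [alt2_length] at h1
      refine le_trans ?_ h1
      rw [wordProd_alt2, max_eq_right h]
      have := entry_le_matMax !![(fg u v n).2, v * ff u v (n+1); u * ff u v n, (fg u v n).2] 0 1
      simpa using this
    · have h1 := le_levelMax u v (alt1 n)
      rw [alt1_length] at h1
      refine le_trans ?_ h1
      rw [wordProd_alt1, max_eq_left h]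
      have := entry_le_matMax !![(fg u v n).2, v * ff u v n; u * ff u v (n+1), (fg u v n).2] 1 0
      simpa using this

lemma ff_rec_real (u v k : ℕ) :
    (ff u v (k+2) : ℝ) + ff u v k = ((u:ℝ)*v+2) * ff u v (k+1) := by
  have h := ff_rec u v k
  have h2 : ((ff u v (k+2) + ff u v k : ℕ) : ℝ) = (((u*v+2) * ff u v (k+1) : ℕ) : ℝ) := by
    exact_mod_cast congrArg (fun x : ℕ => (x:ℝ)) h
  push_cast at h2
  linarith

lemma binet (u v : ℕ) (hu : 1 ≤ u) (hv : 1 ≤ v) (qp qm : ℝ)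
    (hqp : qp = 2 + (u : ℝ) * v + Real.sqrt ((u : ℝ) * v * (4 + (u : ℝ) * v)))
    (hqm : qm = 2 + (u : ℝ) * v - Real.sqrt ((u : ℝ) * v * (4 + (u : ℝ) * v))) :
    ∀ k, 2^k * Real.sqrt ((u:ℝ)*v*(4+(u:ℝ)*v)) * (ff u v k : ℝ) = qp^k - qm^k := by
  set S := Real.sqrt ((u:ℝ)*v*(4+(u:ℝ)*v)) with hS
  have hS2 : S * S = (u:ℝ)*v*(4+(u:ℝ)*v) := Real.mul_self_sqrt (by positivity)
  clear_value S
  subst hqp hqm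
  have key : ∀ k,
      (2^k * S * (ff u v k : ℝ) = (2+(u:ℝ)*v+S)^k - (2+(u:ℝ)*v-S)^k) ∧
      (2^(k+1) * S * (ff u v (k+1) : ℝ) = (2+(u:ℝ)*v+S)^(k+1) - (2+(u:ℝ)*v-S)^(k+1)) := by
    intro k
    induction k with
    | zero =>
        constructor
        · simp [ff, fg]
        · have h1 : ff u v 1 = 1 := rfl
          rw [h1]
          push_cast
          ring
    | succ k ih =>
        obtain ⟨A, B⟩ := ih
        refine ⟨B, ?_⟩
        have hrec := ff_rec_real u v k
        simp only [pow_succ] at B ⊢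
        linear_combination (4*2^k*S) * hrec + (2*((u:ℝ)*v)+4) * B + (-4:ℝ) * A +
          ((2+(u:ℝ)*v-S)^k - (2+(u:ℝ)*v+S)^k) * hS2
  intro k
  exact (key k).1

theorem stmt0 (u v : ℕ) (hu : 1 ≤ u) (hv : 1 ≤ v) (n : ℕ)
    (s t : ℕ) (hs : s = min u v) (ht : t = max u v)
    (qp qm : ℝ)
    (hqp : qp = 2 + (u : ℝ) * v + Real.sqrt ((u : ℝ) * v * (4 + (u : ℝ) * v)))
    (hqm : qm = 2 + (u : ℝ) * v - Real.sqrt ((u : ℝ) * v * (4 + (u : ℝ) * v))) :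
    (levelMax u v (2 * n + 1) : ℝ) =
      Real.sqrt t * (qp ^ (n + 1) - qm ^ (n + 1)) /
        (2 ^ (n + 1) * Real.sqrt ((s : ℝ) * (4 + (u : ℝ) * v))) := by
  have hst : (s:ℝ) * t = (u:ℝ) * v := by
    rcases le_total u v with h | h
    · rw [hs, ht, min_eq_left h, max_eq_right h]; try push_cast
      try ring
    · rw [hs, ht, min_eq_right h, max_eq_left h]; try push_cast
      try ring
  have hs1 : 1 ≤ s := by rw [hs]; exact le_min hu hv
  have hs1' : (1:ℝ) ≤ (s:ℝ) := by exact_mod_cast hs1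
  have h1 : levelMax u v (2*n+1) = t * ff u v (n+1) := by
    rw [levelMax_eq u v hu hv n, ht]
  rw [h1]
  have hb := binet u v hu hv qp qm hqp hqm (n+1)
  rw [← hb]
  set S := Real.sqrt ((u:ℝ)*v*(4+(u:ℝ)*v)) with hSdef
  set S2 := Real.sqrt ((s:ℝ)*(4+(u:ℝ)*v)) with hS2def
  set ST := Real.sqrt (t:ℝ) with hSTdef
  have hS2pos : 0 < S2 := by
    rw [hS2def]
    apply Real.sqrt_pos.mpr
    have : (0:ℝ) < (u:ℝ)*v := by positivity
    nlinarith
  have hT2 : ST * ST = (t:ℝ) := Real.mul_self_sqrt (by positivity)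
  have harg : (u:ℝ)*v*(4+(u:ℝ)*v) = (t:ℝ)*((s:ℝ)*(4+(u:ℝ)*v)) := by
    linear_combination (4+(u:ℝ)*v) * hst.symm
  have hSD : S = ST * S2 := by
    rw [hSdef, hS2def, hSTdef, harg, Real.sqrt_mul (by positivity)]
  rw [hSD]
  have h2pos : (0:ℝ) < 2^(n+1) := by positivity
  push_cast
  field_simp
  linear_combination (-(ff u v (n+1) : ℝ)) * hT2
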